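/- For all complex $s$ with $\Re s > 2$, $\sum_{n=1}^{\infty} (-1)^{n-1} \psi(n)/n^s = \frac{2^s-5}{2^s+1} \cdot \frac{\zeta(s)\zeta(s-1)}{\zeta(2s)}$. -/

import Mathlib

open scoped BigOperators
open ArithmeticFunction LSeries
open scoped ArithmeticFunction.sigma ArithmeticFunction.zeta

/-- The Dedekind psi function `ψ(n) = n ∏_{p ∣ n} (1 + 1/p)`, as a complex number. -/
noncomputable def dedekindPsi (n : ℕ) : ℂ :=
  (n : ℂ) * ∏ p ∈ n.primeFactors, (1 + (p : ℂ)⁻¹)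

namespace DPsiAux

noncomputable def sqMu : ArithmeticFunction ℂ :=
  ⟨fun n => if Nat.sqrt n * Nat.sqrt n = n then ((moebius (Nat.sqrt n) : ℤ) : ℂ) else 0,
   by simp⟩

lemma sqMu_apply (n : ℕ) :
    sqMu n = if Nat.sqrt n * Nat.sqrt n = n then ((moebius (Nat.sqrt n) : ℤ) : ℂ) else 0 := rfl

lemma sqMu_sq (k : ℕ) : sqMu (k * k) = ((moebius k : ℤ) : ℂ) := by
  rw [sqMu_apply, Nat.sqrt_eq k, if_pos rfl]

lemma sqMu_not_sq {n : ℕ} (h : ¬ IsSquare n) : sqMu n = 0 := by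
  rw [sqMu_apply, if_neg]
  intro hc
  exact h ⟨Nat.sqrt n, hc.symm⟩

lemma sqMu_mult : sqMu.IsMultiplicative := by
  constructor
  · rw [show (1 : ℕ) = 1 * 1 from rfl, sqMu_sq]; simp
  · intro m n hmn
    by_cases hm : IsSquare m
    · by_cases hn : IsSquare n
      · obtain ⟨a, rfl⟩ := hm
        obtain ⟨b, rfl⟩ := hn
        have hab : Nat.Coprime a b :=
          Nat.Coprime.coprime_dvd_left (dvd_mul_right a a)
            (Nat.Coprime.coprime_dvd_right (dvd_mul_right b b) hmn)
        have : (a * a) * (b * b) = (a * b) * (a * b) := by ring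
        rw [this, sqMu_sq, sqMu_sq, sqMu_sq, isMultiplicative_moebius.map_mul_of_coprime hab]
        push_cast
        ring
      · rw [sqMu_not_sq hn, mul_zero, sqMu_not_sq]
        intro hc
        obtain ⟨c, hc'⟩ := hc
        obtain ⟨d, hd⟩ :=
          exists_eq_pow_of_mul_eq_pow (a := n) (b := m) (c := c) (k := 2)
            (by rw [Nat.isUnit_iff, gcd_eq_nat_gcd]; exact Nat.coprime_comm.mp hmn)
            (by rw [mul_comm, hc']; ring)
        exact hn ⟨d, by rw [hd]; ring⟩
    · rw [sqMu_not_sq hm, zero_mul, sqMu_not_sq]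
      intro hc
      obtain ⟨c, hc'⟩ := hc
      obtain ⟨d, hd⟩ :=
        exists_eq_pow_of_mul_eq_pow (a := m) (b := n) (c := c) (k := 2)
          (by rw [Nat.isUnit_iff, gcd_eq_nat_gcd]; exact hmn)
          (by rw [hc']; ring)
      exact hm ⟨d, by rw [hd]; ring⟩

lemma not_isSquare_pow_odd {p : ℕ} (hp : p.Prime) {j : ℕ} (hj : ¬ Even j) :
    ¬ IsSquare (p ^ j) := by
  rintro ⟨a, ha⟩
  have hdvd : a ∣ p ^ j := ⟨a, ha⟩
  obtain ⟨t, ht, rfl⟩ := (Nat.dvd_prime_pow hp).mp hdvd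
  rw [← pow_add] at ha
  have := Nat.pow_right_injective hp.two_le ha
  exact hj ⟨t, this.symm ▸ (two_mul t ▸ rfl)⟩

lemma sqMu_prime_pow {p : ℕ} (hp : p.Prime) (j : ℕ) :
    sqMu (p ^ j) = (if j = 0 then 1 else 0) - (if j = 2 then 1 else 0) := by
  rcases Nat.even_or_odd j with ⟨t, rfl⟩ | hodd
  · have : p ^ (t + t) = p ^ t * p ^ t := by rw [pow_add]
    rw [this, sqMu_sq]
    rcases Nat.eq_zero_or_pos t with rfl | ht
    · norm_num
    rcases eq_or_lt_of_le (show 1 ≤ t from ht) with h1 | h2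
    · rw [← h1]
      simp [moebius_apply_prime hp]
    · rw [moebius_apply_prime_pow hp (by omega)]
      rw [if_neg (by omega)]
      have h0 : ¬ (t + t = 0) := by omega
      have h2' : ¬ (t + t = 2) := by omega
      simp [h0, h2', show t ≠ 0 by omega]
  · rw [sqMu_not_sq (not_isSquare_pow_odd hp (Nat.not_even_iff_odd.mpr hodd))]
    have h0 : ¬ (j = 0) := by rintro rfl; exact (Nat.not_even_iff_odd.mpr hodd) Even.zero
    have h2 : ¬ (j = 2) := by rintro rfl; exact (Nat.not_even_iff_odd.mpr hodd) (by norm_num)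
    simp [h0, h2]

noncomputable def psiAF : ArithmeticFunction ℂ :=
  ⟨dedekindPsi, by simp [dedekindPsi]⟩

lemma psiAF_apply (n : ℕ) : psiAF n = dedekindPsi n := rfl

lemma psi_mult : psiAF.IsMultiplicative := by
  constructor
  · simp [psiAF_apply, dedekindPsi]
  · intro m n hmn
    rcases eq_or_ne m 0 with rfl | hm
    · simp [psiAF_apply, dedekindPsi]
    rcases eq_or_ne n 0 with rfl | hn
    · simp [psiAF_apply, dedekindPsi]
    simp only [psiAF_apply, dedekindPsi]
    rw [Nat.primeFactors_mul hm hn,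
      Finset.prod_union (Nat.Coprime.disjoint_primeFactors hmn)]
    push_cast
    ring

lemma dedekindPsi_prime_pow {p : ℕ} (hp : p.Prime) {i : ℕ} (hi : i ≠ 0) :
    dedekindPsi (p ^ i) = (p : ℂ) ^ i + (p : ℂ) ^ (i - 1) := by
  have hp0 : (p : ℂ) ≠ 0 := Nat.cast_ne_zero.mpr hp.pos.ne'
  rw [dedekindPsi, Nat.primeFactors_prime_pow hi hp, Finset.prod_singleton]
  push_cast
  rw [mul_add, mul_one, pow_sub₀ _ hp0 (Nat.one_le_iff_ne_zero.mpr hi), pow_one]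

lemma psi_eq : psiAF = sqMu * ((σ 1 : ArithmeticFunction ℕ) : ArithmeticFunction ℂ) := by
  rw [ArithmeticFunction.IsMultiplicative.eq_iff_eq_on_prime_powers _ psi_mult _
    (sqMu_mult.mul isMultiplicative_sigma.natCast)]
  intro p i hp
  have key : (sqMu * ((σ 1 : ArithmeticFunction ℕ) : ArithmeticFunction ℂ)) (p ^ i) =
      ((σ 1 (p ^ i) : ℕ) : ℂ) -
        (if 2 ∈ Finset.range (i + 1) then ((σ 1 (p ^ (i - 2)) : ℕ) : ℂ) else 0) := by
    rw [mul_apply, Nat.sum_divisorsAntidiagonal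
        (f := fun x y => sqMu x * (((σ 1 : ArithmeticFunction ℕ) : ArithmeticFunction ℂ)) y),
      Nat.sum_divisors_prime_pow hp]
    have step : ∀ j ∈ Finset.range (i + 1),
        sqMu (p ^ j) * (((σ 1 : ArithmeticFunction ℕ) : ArithmeticFunction ℂ)) (p ^ i / p ^ j) =
        (if j = 0 then ((σ 1 (p ^ (i - j)) : ℕ) : ℂ) else 0) -
        (if j = 2 then ((σ 1 (p ^ (i - j)) : ℕ) : ℂ) else 0) := by
      intro j hj
      rw [Nat.pow_div (Nat.lt_succ_iff.mp (Finset.mem_range.mp hj)) hp.pos, sqMu_prime_pow hp j,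
        natCoe_apply]
      split_ifs <;> ring
    rw [Finset.sum_congr rfl step, Finset.sum_sub_distrib,
      Finset.sum_ite_eq' (Finset.range (i + 1)) 0 (fun j => ((σ 1 (p ^ (i - j)) : ℕ) : ℂ)),
      Finset.sum_ite_eq' (Finset.range (i + 1)) 2 (fun j => ((σ 1 (p ^ (i - j)) : ℕ) : ℂ))]
    simp
  rw [key, psiAF_apply]
  match i with
  | 0 =>
    simp [dedekindPsi, isMultiplicative_sigma.map_one]
  | 1 =>
    rw [dedekindPsi_prime_pow hp one_ne_zero]
    rw [if_neg (by simp)]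
    rw [sigma_one_apply_prime_pow hp]
    push_cast [Finset.sum_range_succ]
    ring
  | (m + 2) =>
    rw [dedekindPsi_prime_pow hp (by omega)]
    rw [if_pos (by simp only [Finset.mem_range]; omega)]
    rw [sigma_one_apply_prime_pow hp, sigma_one_apply_prime_pow hp]
    have h1 : m + 2 - 2 = m := by omega
    have h2 : m + 2 - 1 = m + 1 := by omega
    rw [h1, h2]
    push_cast [Finset.sum_range_succ]
    ring


section LSeriesPart

lemma term_sqMu_sq (s : ℂ) (k : ℕ) :
    term (⇑sqMu) s (k * k) = term (fun n => ((moebius n : ℤ) : ℂ)) (2*s) k := by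
  rcases eq_or_ne k 0 with rfl | hk
  · simp [LSeries.term, sqMu_sq 0]
  · have hkk : k * k ≠ 0 := Nat.mul_ne_zero hk hk
    rw [term_of_ne_zero hkk, term_of_ne_zero hk, sqMu_sq k]
    congr 1
    have h1 : ((k * k : ℕ) : ℂ) ^ s = (k:ℂ)^s * (k:ℂ)^s := by
      push_cast
      exact Complex.natCast_mul_natCast_cpow k k s
    rw [h1, two_mul, Complex.cpow_add _ _ (Nat.cast_ne_zero.mpr hk)]

lemma sq_inj : Function.Injective (fun k : ℕ => k * k) := by
  intro a b h
  simpa [Nat.mul_self_inj] using h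

lemma term_sqMu_support (s : ℂ) :
    ∀ x ∉ Set.range (fun k : ℕ => k * k), term (⇑sqMu) s x = 0 := by
  intro x hx
  have hns : ¬ IsSquare x := by
    rintro ⟨r, rfl⟩
    exact hx ⟨r, rfl⟩
  rcases eq_or_ne x 0 with rfl | h0
  · simp [LSeries.term]
  · rw [term_of_ne_zero h0, sqMu_not_sq hns, zero_div]

lemma LSeriesSummable_sqMu {s : ℂ} (h1 : 1 < (2*s).re) :
    LSeriesSummable (⇑sqMu) s := by
  have hμ : LSeriesSummable (fun n => ((moebius n : ℤ) : ℂ)) (2*s) :=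
    LSeriesSummable_moebius_iff.mpr h1
  have : Summable ((term (⇑sqMu) s) ∘ (fun k : ℕ => k * k)) := by
    have : (term (⇑sqMu) s) ∘ (fun k : ℕ => k * k)
        = term (fun n => ((moebius n : ℤ) : ℂ)) (2*s) := funext fun k => term_sqMu_sq s k
    rw [this]
    exact hμ
  exact (Function.Injective.summable_iff sq_inj (term_sqMu_support s)).mp this

lemma LSeries_sqMu {s : ℂ} (h1 : 1 < (2*s).re) :
    LSeries (⇑sqMu) s = (riemannZeta (2*s))⁻¹ := by
  have hrange : Function.support (term (⇑sqMu) s) ⊆ Set.range (fun k : ℕ => k * k) := by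
    intro x hx
    by_contra hc
    exact hx (term_sqMu_support s x hc)
  have h2 : ∑' k : ℕ, term (⇑sqMu) s (k * k) = LSeries (⇑sqMu) s :=
    Function.Injective.tsum_eq sq_inj hrange
  have h3 : ∑' k : ℕ, term (⇑sqMu) s (k * k)
      = LSeries (fun n => ((moebius n : ℤ) : ℂ)) (2*s) :=
    tsum_congr fun k => term_sqMu_sq s k
  have h := LSeries_one_mul_Lseries_moebius (s := 2*s) h1
  rw [LSeries_one_eq_riemannZeta h1] at h
  rw [← h2, h3]
  exact eq_inv_of_mul_eq_one_left (by rw [mul_comm] at h; exact h)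

lemma term_id (s : ℂ) (n : ℕ) : term (fun n => (n:ℂ)) s n = term 1 (s-1) n := by
  rcases eq_or_ne n 0 with rfl | h
  · simp [LSeries.term]
  · rw [term_of_ne_zero h, term_of_ne_zero h, Pi.one_apply,
      Complex.cpow_sub _ _ (Nat.cast_ne_zero.mpr h), Complex.cpow_one, one_div_div]

lemma LSeriesSummable_id {s : ℂ} (h1 : 1 < (s-1).re) :
    LSeriesSummable (fun n => (n:ℂ)) s := by
  have := LSeriesSummable_one_iff.mpr h1
  unfold LSeriesSummable at this ⊢
  rw [funext (term_id s)]
  exact this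

lemma LSeries_id {s : ℂ} (h1 : 1 < (s-1).re) :
    LSeries (fun n => (n:ℂ)) s = riemannZeta (s-1) := by
  unfold LSeries
  rw [tsum_congr (term_id s)]
  exact LSeries_one_eq_riemannZeta h1

lemma coe_pow_one : ⇑((ArithmeticFunction.pow 1 : ArithmeticFunction ℕ) :
    ArithmeticFunction ℂ) = (fun n : ℕ => (n : ℂ)) := by
  funext n
  simp [natCoe_apply, pow_apply]

lemma coe_zeta_fun : ⇑((ζ : ArithmeticFunction ℕ) : ArithmeticFunction ℂ)
    = (fun n : ℕ => ((ζ n : ℕ) : ℂ)) := by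
  funext n
  simp [natCoe_apply]

lemma re_facts {s : ℂ} (hs : 2 < s.re) :
    1 < (2*s).re ∧ 1 < s.re ∧ 1 < (s-1).re := by
  have h2 : (2*s).re = 2*s.re := by
    simp [Complex.mul_re]
  have h3 : (s-1).re = s.re - 1 := by simp [Complex.sub_re]
  refine ⟨by rw [h2]; linarith, by linarith, by rw [h3]; linarith⟩

lemma LSeriesSummable_psi {s : ℂ} (hs : 2 < s.re) :
    LSeriesSummable dedekindPsi s := by
  obtain ⟨h2s, hs1, hs1'⟩ := re_facts hs
  have hζ : LSeriesSummable (⇑((ζ : ArithmeticFunction ℕ) : ArithmeticFunction ℂ)) s := by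
    rw [coe_zeta_fun]
    exact LSeriesSummable_zeta_iff.mpr hs1
  have hid : LSeriesSummable (⇑((ArithmeticFunction.pow 1 : ArithmeticFunction ℕ) :
      ArithmeticFunction ℂ)) s := by
    rw [coe_pow_one]
    exact LSeriesSummable_id hs1'
  have h1 : LSeriesSummable
      (⇑(((ζ : ArithmeticFunction ℕ) : ArithmeticFunction ℂ) *
        ((ArithmeticFunction.pow 1 : ArithmeticFunction ℕ) : ArithmeticFunction ℂ))) s :=
    ArithmeticFunction.LSeriesSummable_mul hζ hid
  have h0 : LSeriesSummable (⇑sqMu) s := LSeriesSummable_sqMu h2s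
  have h2 : LSeriesSummable
      (⇑(sqMu * (((ζ : ArithmeticFunction ℕ) : ArithmeticFunction ℂ) *
        ((ArithmeticFunction.pow 1 : ArithmeticFunction ℕ) : ArithmeticFunction ℂ)))) s :=
    ArithmeticFunction.LSeriesSummable_mul h0 h1
  have key : psiAF = sqMu * (((ζ : ArithmeticFunction ℕ) : ArithmeticFunction ℂ) *
      ((ArithmeticFunction.pow 1 : ArithmeticFunction ℕ) : ArithmeticFunction ℂ)) := by
    rw [psi_eq, ← natCoe_mul, zeta_mul_pow_eq_sigma]
  have : dedekindPsi = ⇑psiAF := rfl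
  rw [this, key]
  exact h2

lemma LSeries_psi {s : ℂ} (hs : 2 < s.re) :
    LSeries dedekindPsi s
      = riemannZeta s * riemannZeta (s-1) / riemannZeta (2*s) := by
  obtain ⟨h2s, hs1, hs1'⟩ := re_facts hs
  have hζ : LSeriesSummable (⇑((ζ : ArithmeticFunction ℕ) : ArithmeticFunction ℂ)) s := by
    rw [coe_zeta_fun]
    exact LSeriesSummable_zeta_iff.mpr hs1
  have hid : LSeriesSummable (⇑((ArithmeticFunction.pow 1 : ArithmeticFunction ℕ) :
      ArithmeticFunction ℂ)) s := by
    rw [coe_pow_one]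
    exact LSeriesSummable_id hs1'
  have h0 : LSeriesSummable (⇑sqMu) s := LSeriesSummable_sqMu h2s
  have key : psiAF = sqMu * (((ζ : ArithmeticFunction ℕ) : ArithmeticFunction ℂ) *
      ((ArithmeticFunction.pow 1 : ArithmeticFunction ℕ) : ArithmeticFunction ℂ)) := by
    rw [psi_eq, ← natCoe_mul, zeta_mul_pow_eq_sigma]
  have : dedekindPsi = ⇑psiAF := rfl
  rw [this, key, ArithmeticFunction.LSeries_mul' h0 (ArithmeticFunction.LSeriesSummable_mul hζ hid),
    ArithmeticFunction.LSeries_mul' hζ hid, LSeries_sqMu h2s]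
  rw [coe_zeta_fun, coe_pow_one, LSeries_zeta_eq_riemannZeta hs1, LSeries_id hs1']
  rw [div_eq_mul_inv]
  ring

end LSeriesPart



lemma psi_two_mul (m : ℕ) :
    dedekindPsi (2 * m) = (if 2 ∣ m then 2 else 3) * dedekindPsi m := by
  rcases eq_or_ne m 0 with rfl | hm
  · simp [dedekindPsi]
  by_cases h2 : 2 ∣ m
  · rw [if_pos h2]
    unfold dedekindPsi
    rw [Nat.primeFactors_mul two_ne_zero hm, Nat.Prime.primeFactors Nat.prime_two,
      Finset.union_eq_right.mpr (Finset.singleton_subset_iff.mpr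
        (Nat.mem_primeFactors.mpr ⟨Nat.prime_two, h2, hm⟩))]
    push_cast
    ring
  · rw [if_neg h2]
    unfold dedekindPsi
    have hdisj : Disjoint (Nat.primeFactors 2) m.primeFactors := by
      rw [Nat.Prime.primeFactors Nat.prime_two, Finset.disjoint_singleton_left]
      intro hc
      exact h2 (Nat.mem_primeFactors.mp hc).2.1
    rw [Nat.primeFactors_mul two_ne_zero hm, Finset.prod_union hdisj,
      Nat.Prime.primeFactors Nat.prime_two, Finset.prod_singleton]
    push_cast
    norm_num
    ring

lemma term_two_mul {s : ℂ} (m : ℕ) :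
    term dedekindPsi s (2 * m)
      = ((2:ℂ)^s)⁻¹ * (3 * term dedekindPsi s m
          - (if 2 ∣ m then term dedekindPsi s m else 0)) := by
  rcases eq_or_ne m 0 with rfl | hm
  · simp [LSeries.term]
  · have h2m : 2 * m ≠ 0 := by omega
    rw [term_of_ne_zero h2m, term_of_ne_zero hm]
    have hcast : ((2 * m : ℕ) : ℂ) ^ s = (2:ℂ)^s * (m:ℂ)^s := by
      push_cast
      exact Complex.natCast_mul_natCast_cpow 2 m s
    have h2s : (2:ℂ)^s ≠ 0 := by
      intro hc
      rcases (Complex.cpow_eq_zero_iff _ _).mp hc with ⟨h, -⟩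
      norm_num at h
    have hms : ((m:ℂ))^s ≠ 0 := by
      intro hc
      rcases (Complex.cpow_eq_zero_iff _ _).mp hc with ⟨h, -⟩
      exact hm (by exact_mod_cast h)
    rw [psi_two_mul m, hcast]
    by_cases h2 : 2 ∣ m
    · rw [if_pos h2, if_pos h2]
      field_simp
      ring
    · rw [if_neg h2, if_neg h2]
      field_simp
      ring

lemma two_pow_add_one_ne {s : ℂ} (hs : 2 < s.re) : (2:ℂ)^s + 1 ≠ 0 := by
  intro h
  have h1 : (2:ℂ)^s = -1 := by linear_combination h
  have habs : ‖(2:ℂ)^s‖ = 1 := by rw [h1]; simp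
  have h2 : ((2:ℝ):ℂ) = (2:ℂ) := by norm_num
  rw [← h2, Complex.norm_cpow_eq_rpow_re_of_pos (by norm_num : (0:ℝ) < 2)] at habs
  have : 1 < (2:ℝ) ^ s.re :=
    Real.one_lt_rpow_iff_of_pos (by norm_num) |>.mpr (Or.inl ⟨by norm_num, by linarith⟩)
  linarith


end DPsiAux


/-- For `Re s > 2`,
`∑ (-1)^(n-1) ψ(n)/n^s = (2^s - 5)/(2^s + 1) * ζ(s)ζ(s-1)/ζ(2s)`. -/
theorem alternating_dirichlet_series_dedekind_psi (s : ℂ) (hs : 2 < s.re) :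
    ∑' n : ℕ+, (-1 : ℂ) ^ ((n : ℕ) - 1) * dedekindPsi n / (n : ℂ) ^ s =
      ((2 : ℂ) ^ s - 5) / ((2 : ℂ) ^ s + 1) *
        (riemannZeta s * riemannZeta (s - 1) / riemannZeta (2 * s)) := by
  classical
  have hzero : dedekindPsi 0 = 0 := by simp [dedekindPsi]
  set T : ℕ → ℂ := LSeries.term dedekindPsi s with hTdef
  set b : ℕ → ℂ := fun n => (-1 : ℂ) ^ (n - 1) * dedekindPsi n / (n : ℂ) ^ s with hbdef
  set U : ℕ → ℂ := fun n => if 2 ∣ n then T n else 0 with hUdef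
  have hT : Summable T := DPsiAux.LSeriesSummable_psi hs
  have hU : Summable U := by
    have hind : U = Set.indicator {n | 2 ∣ n} T := by
      funext n
      rw [Set.indicator_apply]
      simp [hUdef, Set.mem_setOf_eq]
    rw [hind]
    exact hT.indicator _
  have hlhs : ∑' n : ℕ+, (-1 : ℂ) ^ ((n : ℕ) - 1) * dedekindPsi n / (n : ℂ) ^ s
      = ∑' n : ℕ, b n := by
    have hsupp : Function.support b ⊆ Set.range ((↑·) : ℕ+ → ℕ) := by
      intro x hx
      rcases eq_or_ne x 0 with rfl | h0
      · exact absurd (by simp [hbdef, hzero]) hx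
      · exact ⟨⟨x, Nat.pos_of_ne_zero h0⟩, rfl⟩
    have hre := Function.Injective.tsum_eq (g := ((↑·) : ℕ+ → ℕ)) (f := b)
      (fun a b h => PNat.coe_injective h) hsupp
    rw [← hre]
  have hb : ∀ n, b n = T n - 2 * U n := by
    intro n
    rcases eq_or_ne n 0 with rfl | h0
    · simp [hbdef, hUdef, hTdef, LSeries.term, hzero]
    · by_cases h2 : 2 ∣ n
      · have hodd : (n - 1) % 2 = 1 := by omega
        have hpow : (-1 : ℂ) ^ (n - 1) = -1 := Odd.neg_one_pow (Nat.odd_iff.mpr hodd)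
        simp only [hbdef, hUdef, if_pos h2, hTdef, LSeries.term_of_ne_zero h0, hpow]
        ring
      · have heven : (n - 1) % 2 = 0 := by omega
        have hpow : (-1 : ℂ) ^ (n - 1) = 1 := Even.neg_one_pow (Nat.even_iff.mpr heven)
        simp only [hbdef, hUdef, if_neg h2, hTdef, LSeries.term_of_ne_zero h0, hpow]
        ring
  set D := LSeries dedekindPsi s with hDdef
  have hDts : ∑' n, T n = D := rfl
  set E := ∑' n, U n with hEdef
  have hdinj : Function.Injective (fun m : ℕ => 2 * m) :=
    fun a b h => Nat.eq_of_mul_eq_mul_left (by norm_num) h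
  have hEsupp : Function.support U ⊆ Set.range (fun m : ℕ => 2 * m) := by
    intro x hx
    by_cases h : 2 ∣ x
    · obtain ⟨k, rfl⟩ := h
      exact ⟨k, rfl⟩
    · exact absurd (by simp [hUdef, h]) hx
  have hEe : ∑' m : ℕ, T (2 * m) = E := by
    rw [hEdef, ← Function.Injective.tsum_eq hdinj hEsupp]
    exact tsum_congr fun m => by simp [hUdef, Dvd.intro m rfl]
  have h2s : (2:ℂ)^s ≠ 0 := by
    intro hc
    rcases (Complex.cpow_eq_zero_iff _ _).mp hc with ⟨hcc, -⟩
    norm_num at hcc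
  have hEeq : E = ((2:ℂ)^s)⁻¹ * (3 * D - E) := by
    conv_lhs => rw [← hEe]
    calc ∑' m : ℕ, T (2*m)
        = ∑' m : ℕ, ((2:ℂ)^s)⁻¹ * (3 * T m - U m) := by
          refine tsum_congr fun m => ?_
          simpa only [hUdef] using DPsiAux.term_two_mul (s := s) m
      _ = ((2:ℂ)^s)⁻¹ * ((∑' m : ℕ, 3 * T m) - ∑' m : ℕ, U m) := by
          rw [tsum_mul_left, Summable.tsum_sub (hT.mul_left 3) hU]
      _ = ((2:ℂ)^s)⁻¹ * (3 * D - E) := by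
          rw [tsum_mul_left, hDts]
  have hden : (2:ℂ)^s + 1 ≠ 0 := DPsiAux.two_pow_add_one_ne hs
  have hE' : E * (2:ℂ)^s = 3 * D - E := by
    rw [inv_mul_eq_div, eq_div_iff h2s] at hEeq
    linear_combination hEeq
  have hA : ∑' n : ℕ, b n = D - 2 * E := by
    calc ∑' n : ℕ, b n = ∑' n : ℕ, (T n - 2 * U n) := tsum_congr hb
      _ = (∑' n : ℕ, T n) - ∑' n : ℕ, 2 * U n := Summable.tsum_sub hT (hU.mul_left 2)
      _ = D - 2 * E := by rw [hDts, tsum_mul_left, ← hEdef]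
  have hDval : D = riemannZeta s * riemannZeta (s - 1) / riemannZeta (2 * s) :=
    DPsiAux.LSeries_psi hs
  rw [hlhs, hA, ← hDval]
  field_simp
  linear_combination (-2 : ℂ) * hE'
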